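/- For every n ≥ 4 there exists a prefix-closed regular language L over a four-letter alphabet with quotient complexity κ(L) = n and syntactic complexity σ(L) = n^{n-1}; that is, the bound n^{n-1} is tight for prefix-closed languages. -/

import Mathlib

/-- The left quotient of a language `L` by a word `w`: `{x | w ++ x ∈ L}`. -/
def leftQ {α : Type*} (L : Set (List α)) (w : List α) : Set (List α) :=
  {x | w ++ x ∈ L}

/-- Quotient (state) complexity: the number of distinct left quotients of `L`. -/
noncomputable def quotCompl {α : Type*} (L : Set (List α)) : ℕ :=
  Nat.card (Set.range (leftQ L))

/-- The syntactic (Myhill) congruence of `L`. -/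
def synRel {α : Type*} (L : Set (List α)) (x y : List α) : Prop :=
  ∀ u v : List α, u ++ x ++ v ∈ L ↔ u ++ y ++ v ∈ L

/-- The syntactic setoid on the free semigroup of non-empty words. -/
def synSetoid {α : Type*} (L : Set (List α)) : Setoid {w : List α // w ≠ []} :=
  ⟨fun x y => synRel L x.1 y.1,
   ⟨fun _ _ _ => Iff.rfl, fun h u v => (h u v).symm,
    fun h₁ h₂ u v => (h₁ u v).trans (h₂ u v)⟩⟩

/-- Syntactic complexity: the cardinality of the syntactic semigroup of `L`. -/
noncomputable def synCompl {α : Type*} (L : Set (List α)) : ℕ :=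
  Nat.card (Quotient (synSetoid L))

/-- `L` is a right ideal: it is non-empty and `L = LΣ*`. -/
def IsRightIdeal {α : Type*} (L : Set (List α)) : Prop :=
  L.Nonempty ∧ L = {x | ∃ u ∈ L, ∃ v : List α, x = u ++ v}

/-- `L` is a left ideal: it is non-empty and `L = Σ*L`. -/
def IsLeftIdeal {α : Type*} (L : Set (List α)) : Prop :=
  L.Nonempty ∧ L = {x | ∃ u : List α, ∃ v ∈ L, x = u ++ v}

/-- `L` is a two-sided ideal: it is non-empty and `L = Σ*LΣ*`. -/
def IsTwoSidedIdeal {α : Type*} (L : Set (List α)) : Prop :=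
  L.Nonempty ∧ L = {x | ∃ u : List α, ∃ w ∈ L, ∃ v : List α, x = u ++ w ++ v}

/-- The reverse of a language. -/
def langReverse {α : Type*} (L : Set (List α)) : Set (List α) :=
  List.reverse '' L


namespace Stmt10

variable (k : ℕ)

/-- Extend a map `Fin (k+3) → Fin (k+4)` to `Fin (k+4)` by fixing the sink `last`. -/
def ext (g : Fin (k+3) → Fin (k+4)) : Fin (k+4) → Fin (k+4) :=
  Fin.lastCases (Fin.last (k+3)) g

/-- Extend a transformation of non-sink states, fixing the sink. -/
def E (g : Fin (k+3) → Fin (k+3)) : Fin (k+4) → Fin (k+4) :=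
  ext k (fun i => (g i).castSucc)

variable {k}

@[simp] lemma ext_last (g : Fin (k+3) → Fin (k+4)) : ext k g (Fin.last (k+3)) = Fin.last (k+3) :=
  Fin.lastCases_last

@[simp] lemma ext_castSucc (g : Fin (k+3) → Fin (k+4)) (i : Fin (k+3)) :
    ext k g i.castSucc = g i := Fin.lastCases_castSucc i

@[simp] lemma E_last (g : Fin (k+3) → Fin (k+3)) : E k g (Fin.last (k+3)) = Fin.last (k+3) :=
  ext_last _

@[simp] lemma E_castSucc (g : Fin (k+3) → Fin (k+3)) (i : Fin (k+3)) :
    E k g i.castSucc = (g i).castSucc := ext_castSucc _ _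

lemma E_comp (f g : Fin (k+3) → Fin (k+3)) : E k f ∘ E k g = E k (f ∘ g) := by
  funext x
  induction x using Fin.lastCases with
  | last => simp
  | cast i => simp

lemma E_id : E k id = id := by
  funext x
  induction x using Fin.lastCases with
  | last => simp
  | cast i => simp

variable (k)

/-- collapse i to j -/
def collapse (i j : Fin (k+3)) : Fin (k+3) → Fin (k+3) := fun x => if x = i then j else x

/-- kill i (send it to the sink) -/
def kill (i : Fin (k+3)) : Fin (k+4) → Fin (k+4) :=
  ext k (fun x => if x = i then Fin.last (k+3) else x.castSucc)

/-- the four letters -/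
def δ : Fin 4 → Fin (k+4) → Fin (k+4)
  | 0 => E k (finRotate (k+3))
  | 1 => E k (Equiv.swap 0 1)
  | 2 => E k (collapse k 0 1)
  | 3 => kill k 0

/-- the action of a word -/
def actF (w : List (Fin 4)) : Fin (k+4) → Fin (k+4) :=
  fun q => w.foldl (fun q a => δ k a q) q

variable {k}

@[simp] lemma actF_nil : actF k [] = id := rfl

lemma actF_cons (a : Fin 4) (w : List (Fin 4)) (q : Fin (k+4)) :
    actF k (a :: w) q = actF k w (δ k a q) := rfl

lemma actF_append (u v : List (Fin 4)) : actF k (u ++ v) = actF k v ∘ actF k u := by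
  funext q
  simp [actF, List.foldl_append]

lemma δ_last (a : Fin 4) : δ k a (Fin.last (k+3)) = Fin.last (k+3) := by
  fin_cases a <;> simp [δ, kill]

lemma actF_last (w : List (Fin 4)) : actF k w (Fin.last (k+3)) = Fin.last (k+3) := by
  induction w with
  | nil => rfl
  | cons a w ih => rw [actF_cons, δ_last, ih]

/-- realizable transformations -/
def R (f : Fin (k+4) → Fin (k+4)) : Prop := ∃ w : List (Fin 4), w ≠ [] ∧ actF k w = f

lemma R_comp {f g : Fin (k+4) → Fin (k+4)} (hf : R f) (hg : R g) : R (f ∘ g) := by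
  obtain ⟨w, hw, rfl⟩ := hf
  obtain ⟨w', hw', rfl⟩ := hg
  exact ⟨w' ++ w, by simp [hw'], (actF_append _ _).symm ▸ rfl⟩

lemma R_gen (a : Fin 4) : R (δ k a) := ⟨[a], by simp, by funext q; rfl⟩

lemma R_id : R (id : Fin (k+4) → Fin (k+4)) := by
  have : E k (Equiv.swap 0 1) ∘ E k (Equiv.swap 0 1) = id := by
    rw [E_comp]
    rw [show ((Equiv.swap (0:Fin (k+3)) 1) ∘ (Equiv.swap 0 1)) = id by
      funext x; simp]
    exact E_id
  rw [← this]
  exact R_comp (R_gen 1) (R_gen 1)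

end Stmt10

namespace Stmt10
variable {k : ℕ}

lemma R_pow {σ : Equiv.Perm (Fin (k+3))} (h : R (E k σ)) (j : ℕ) : R (E k ⇑(σ ^ j)) := by
  induction j with
  | zero => simpa [E_id] using (R_id (k := k))
  | succ j ih =>
    have : ⇑(σ ^ (j+1)) = ⇑(σ ^ j) ∘ ⇑σ := by
      rw [pow_succ]; rfl
    rw [this, ← E_comp]
    exact R_comp ih h

lemma R_perm (σ : Equiv.Perm (Fin (k+3))) : R (E k ⇑σ) := by
  have hclos : Subgroup.closure
      ({finRotate (k+3), Equiv.swap 0 (finRotate (k+3) 0)} : Set (Equiv.Perm (Fin (k+3)))) = ⊤ :=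
    Equiv.Perm.closure_cycle_adjacent_swap isCycle_finRotate support_finRotate 0
  have hmem : σ ∈ Subgroup.closure
      ({finRotate (k+3), Equiv.swap 0 (finRotate (k+3) 0)} : Set (Equiv.Perm (Fin (k+3)))) := by
    rw [hclos]; trivial
  induction hmem using Subgroup.closure_induction with
  | mem x hx =>
    rcases hx with h | h
    · subst h; exact R_gen 0
    · simp only [Set.mem_singleton_iff] at h
      subst h
      rw [show (finRotate (k+3)) 0 = 1 by simp]
      exact R_gen 1
  | one => simpa [E_id] using (R_id (k := k))
  | mul x y hx hy ihx ihy =>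
    have : ⇑(x * y) = ⇑x ∘ ⇑y := rfl
    rw [this, ← E_comp]; exact R_comp ihx ihy
  | inv x hx ihx =>
    have ho : 0 < orderOf x := orderOf_pos x
    have : x⁻¹ = x ^ (orderOf x - 1) := by
      apply inv_eq_of_mul_eq_one_right
      rw [← pow_succ']
      rw [Nat.sub_add_cancel ho]
      exact pow_orderOf_eq_one x
    rw [this]
    exact R_pow ihx _

end Stmt10

namespace Stmt10
variable {k : ℕ}

lemma perm_apply_inv_self {α : Type*} (σ : Equiv.Perm α) (x : α) : σ (σ⁻¹ x) = x :=
  σ.apply_symm_apply x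

lemma exists_perm_two (i j : Fin (k+3)) (hij : i ≠ j) :
    ∃ σ : Equiv.Perm (Fin (k+3)), σ 0 = i ∧ σ 1 = j := by
  classical
  refine ⟨Equiv.swap 0 i * Equiv.swap 1 ((Equiv.swap 0 i)⁻¹ j), ?_, ?_⟩
  · have h0 : (0 : Fin (k+3)) ≠ (Equiv.swap 0 i)⁻¹ j := by
      intro h
      apply hij
      have := congrArg (Equiv.swap 0 i) h
      rw [perm_apply_inv_self, Equiv.swap_apply_left] at this
      exact this
    simp only [Equiv.Perm.mul_apply]
    rw [Equiv.swap_apply_of_ne_of_ne (by norm_num) h0, Equiv.swap_apply_left]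
  · simp only [Equiv.Perm.mul_apply]
    rw [Equiv.swap_apply_left, perm_apply_inv_self]

lemma R_collapse (i j : Fin (k+3)) (hij : i ≠ j) : R (E k (collapse k i j)) := by
  obtain ⟨σ, h0, h1⟩ := exists_perm_two i j hij
  have hfun : ⇑σ ∘ collapse k 0 1 ∘ ⇑σ⁻¹ = collapse k i j := by
    funext x
    simp only [Function.comp_apply, collapse]
    by_cases hx : x = i
    · rw [hx, show σ⁻¹ i = 0 by rw [← h0]; simp, if_pos rfl, if_pos rfl, h1]
    · rw [if_neg hx, if_neg (by
        intro h
        apply hx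
        have := congrArg σ h
        rw [perm_apply_inv_self, h0] at this
        exact this), perm_apply_inv_self]
  have key : E k ⇑σ ∘ E k (collapse k 0 1) ∘ E k ⇑σ⁻¹ = E k (collapse k i j) := by
    rw [E_comp, E_comp, hfun]
  rw [← key]
  exact R_comp (R_perm σ) (R_comp (R_gen 2) (R_perm σ⁻¹))

lemma R_kill (i : Fin (k+3)) : R (kill k i) := by
  obtain ⟨σ, h0, _⟩ := exists_perm_two i (if i = 0 then 1 else 0) (by split <;> simp_all)
  have key : E k ⇑σ ∘ kill k 0 ∘ E k ⇑σ⁻¹ = kill k i := by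
    funext x
    induction x using Fin.lastCases with
    | last => simp [kill]
    | cast x =>
      simp only [Function.comp_apply, E_castSucc, kill, ext_castSucc]
      by_cases hx : x = i
      · subst hx
        rw [show σ⁻¹ x = 0 from by rw [← h0]; simp, if_pos rfl, if_pos rfl]
        simp
      · rw [if_neg (by
          intro h
          apply hx
          have := congrArg σ h
          rw [perm_apply_inv_self, h0] at this
          exact this), if_neg hx]
        simp
  rw [← key]
  exact R_comp (R_perm σ) (R_comp (R_gen 3) (R_perm σ⁻¹))

end Stmt10

namespace Stmt10
variable {k : ℕ}

lemma R_E (g : Fin (k+3) → Fin (k+3)) : R (E k g) := by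
  classical
  generalize hc : (Finset.univ \ Finset.image g Finset.univ).card = c
  induction c using Nat.strong_induction_on generalizing g with
  | _ c ih =>
  by_cases hinj : Function.Injective g
  · have hbij : Function.Bijective g := Finite.injective_iff_bijective.mp hinj
    have : g = ⇑(Equiv.ofBijective g hbij) := rfl
    rw [this]
    exact R_perm _
  · -- not injective, hence not surjective
    have hsurj : ¬ Function.Surjective g := fun h =>
      hinj (Finite.injective_iff_surjective.mpr h)
    simp only [Function.Surjective, not_forall, not_exists] at hsurj
    obtain ⟨c₀, hc₀⟩ := hsurj
    have hc₀' : c₀ ∉ Finset.image g Finset.univ := by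
      simp only [Finset.mem_image, Finset.mem_univ, true_and]
      exact fun ⟨x, hx⟩ => hc₀ x hx
    simp only [Function.Injective, not_forall] at hinj
    obtain ⟨i, j, hgij, hij⟩ := hinj
    set g' : Fin (k+3) → Fin (k+3) := Function.update g i c₀ with hg'
    have himage : Finset.image g Finset.univ ⊆ Finset.image g' Finset.univ := by
      intro y hy
      simp only [Finset.mem_image, Finset.mem_univ, true_and] at hy ⊢
      obtain ⟨x, hx⟩ := hy
      by_cases hxi : x = i
      · exact ⟨j, by rw [hg', Function.update_of_ne (Ne.symm hij), ← hgij, ← hxi, hx]⟩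
      · exact ⟨x, by rw [hg', Function.update_of_ne hxi, hx]⟩
    have hcmem : c₀ ∈ Finset.image g' Finset.univ := by
      simp only [Finset.mem_image, Finset.mem_univ, true_and]
      exact ⟨i, by rw [hg', Function.update_self]⟩
    have hlt : (Finset.univ \ Finset.image g' Finset.univ).card < c := by
      rw [← hc]
      apply Finset.card_lt_card
      constructor
      · intro y hy
        simp only [Finset.mem_sdiff, Finset.mem_univ, true_and] at hy ⊢
        exact fun h => hy (himage h)
      · intro hsub
        have := hsub (Finset.mem_sdiff.mpr ⟨Finset.mem_univ c₀, hc₀'⟩)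
        simp only [Finset.mem_sdiff] at this
        exact this.2 hcmem
    have hdecomp : E k g = E k (collapse k c₀ (g i)) ∘ E k g' := by
      rw [E_comp]
      have : collapse k c₀ (g i) ∘ g' = g := by
        funext x
        simp only [Function.comp_apply, collapse, hg']
        by_cases hxi : x = i
        · subst hxi
          rw [Function.update_self, if_pos rfl]
        · rw [Function.update_of_ne hxi, if_neg (fun h => hc₀ x h)]
      rw [this]
    rw [hdecomp]
    have hne : c₀ ≠ g i := fun h => hc₀ i h.symm
    exact R_comp (R_collapse _ _ hne) (ih _ hlt g' rfl)

lemma R_all (f : Fin (k+4) → Fin (k+4)) (hf : f (Fin.last (k+3)) = Fin.last (k+3)) :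
    R f := by
  classical
  generalize hc : (Finset.univ.filter
      (fun i : Fin (k+3) => f i.castSucc = Fin.last (k+3))).card = c
  induction c using Nat.strong_induction_on generalizing f with
  | _ c ih =>
  by_cases hS : (Finset.univ.filter
      (fun i : Fin (k+3) => f i.castSucc = Fin.last (k+3))) = ∅
  · -- no non-sink state maps to the sink
    have hne : ∀ i : Fin (k+3), f i.castSucc ≠ Fin.last (k+3) := by
      intro i hi
      exact Finset.notMem_empty i (hS ▸ Finset.mem_filter.mpr ⟨Finset.mem_univ i, hi⟩)
    have : f = E k (fun i => (f i.castSucc).castPred (hne i)) := by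
      funext x
      induction x using Fin.lastCases with
      | last => rw [hf, E_last]
      | cast i => rw [E_castSucc, Fin.castSucc_castPred]
    rw [this]
    exact R_E _
  · obtain ⟨i, hi⟩ := Finset.nonempty_iff_ne_empty.mpr hS
    simp only [Finset.mem_filter, Finset.mem_univ, true_and] at hi
    set f₁ : Fin (k+4) → Fin (k+4) :=
      fun x => if x = i.castSucc then i.castSucc else f x with hf₁
    have hf₁last : f₁ (Fin.last (k+3)) = Fin.last (k+3) := by
      rw [hf₁]
      simp only
      rw [if_neg (Fin.castSucc_lt_last i).ne', hf]
    have hdecomp : f = f₁ ∘ kill k i := by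
      funext x
      induction x using Fin.lastCases with
      | last => simp [kill, hf₁last, hf]
      | cast x =>
        simp only [Function.comp_apply, kill, ext_castSucc]
        by_cases hx : x = i
        · subst hx
          rw [if_pos rfl, hf₁last, hi]
        · rw [if_neg hx, hf₁]
          simp only
          rw [if_neg (fun h => hx (Fin.castSucc_injective _ h))]
    have hcard : (Finset.univ.filter
        (fun x : Fin (k+3) => f₁ x.castSucc = Fin.last (k+3))).card < c := by
      rw [← hc]
      apply Finset.card_lt_card
      constructor
      · intro x hx
        simp only [Finset.mem_filter, Finset.mem_univ, true_and, hf₁] at hx ⊢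
        by_cases hxi : x = i
        · exfalso
          rw [if_pos (by rw [hxi])] at hx
          exact (Fin.castSucc_lt_last i).ne hx
        · rwa [if_neg (fun h => hxi (Fin.castSucc_injective _ h))] at hx
      · intro hsub
        have := hsub (Finset.mem_filter.mpr ⟨Finset.mem_univ i, hi⟩)
        simp only [Finset.mem_filter, Finset.mem_univ, true_and, hf₁, if_pos rfl] at this
        exact (Fin.castSucc_lt_last i).ne this
    rw [hdecomp]
    exact R_comp (ih _ hcard f₁ hf₁last rfl) (R_kill i)

end Stmt10

namespace Stmt10
variable {k : ℕ}
open Fin.NatCast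
open Fin.CommRing

lemma finRotate_pow (t : ℕ) (x : Fin (k+3)) :
    ((finRotate (k+3)) ^ t) x = x + (t : Fin (k+3)) := by
  induction t with
  | zero => simp
  | succ t ih =>
    rw [pow_succ', Equiv.Perm.mul_apply, finRotate_succ_apply, ih]
    push_cast
    ring

lemma actF_replicate (t : ℕ) (x : Fin (k+3)) :
    actF k (List.replicate t 0) x.castSucc = (x + (t : Fin (k+3))).castSucc := by
  induction t generalizing x with
  | zero => simp
  | succ t ih =>
    rw [List.replicate_succ, actF_cons]
    show actF k (List.replicate t 0) (E k (finRotate (k+3)) x.castSucc) = _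
    rw [E_castSucc, finRotate_succ_apply, ih]
    push_cast
    ring_nf

lemma kill_castSucc (i x : Fin (k+3)) :
    kill k i x.castSucc = if x = i then Fin.last (k+3) else x.castSucc :=
  ext_castSucc _ _

lemma delta3_castSucc (x : Fin (k+3)) :
    δ k 3 x.castSucc = if x = 0 then Fin.last (k+3) else x.castSucc :=
  kill_castSucc _ _

lemma reach (q : Fin (k+4)) : ∃ w : List (Fin 4), actF k w 0 = q := by
  induction q using Fin.lastCases with
  | last =>
    refine ⟨[3], ?_⟩
    show id (δ k 3 0) = _
    rw [id, ← Fin.castSucc_zero, delta3_castSucc, if_pos rfl]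
  | cast i =>
    refine ⟨List.replicate i.val 0, ?_⟩
    have h := actF_replicate (k := k) i.val (0 : Fin (k+3))
    rw [Fin.castSucc_zero] at h
    rw [h, zero_add, Fin.cast_val_eq_self]

lemma add_compl_eq_zero (i : Fin (k+3)) : i + ((k + 3 - i.val : ℕ) : Fin (k+3)) = 0 := by
  have h1 : ((i.val : ℕ) : Fin (k+3)) + ((k + 3 - i.val : ℕ) : Fin (k+3))
      = (((i.val + (k + 3 - i.val)) : ℕ) : Fin (k+3)) := by push_cast; ring
  have h2 : i.val + (k + 3 - i.val) = k + 3 := by omega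
  calc i + ((k + 3 - i.val : ℕ) : Fin (k+3))
      = ((i.val : ℕ) : Fin (k+3)) + ((k + 3 - i.val : ℕ) : Fin (k+3)) := by
        rw [Fin.cast_val_eq_self]
    _ = (((k + 3 : ℕ)) : Fin (k+3)) := by rw [h1, h2]
    _ = 0 := Fin.natCast_self _

/-- distinguishing word -/
lemma distinguish (p q : Fin (k+4)) (hpq : p ≠ q) :
    ∃ v : List (Fin 4), (actF k v p = Fin.last (k+3)) ≠ (actF k v q = Fin.last (k+3)) := by
  have key : ∀ i j : Fin (k+3), i ≠ j → ∃ v : List (Fin 4),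
      actF k v i.castSucc = Fin.last (k+3) ∧ actF k v j.castSucc ≠ Fin.last (k+3) := by
    intro i j hij
    refine ⟨List.replicate (k + 3 - i.val) 0 ++ [3], ?_, ?_⟩
    · rw [actF_append, Function.comp_apply, actF_replicate, add_compl_eq_zero]
      show id (δ k 3 (Fin.castSucc 0)) = _
      rw [id, delta3_castSucc, if_pos rfl]
    · rw [actF_append, Function.comp_apply, actF_replicate]
      have hne : j + ((k + 3 - i.val : ℕ) : Fin (k+3)) ≠ 0 := by
        rw [← add_compl_eq_zero i]
        intro h
        exact hij (add_right_cancel h).symm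
      show id (δ k 3 _) ≠ _
      rw [id, delta3_castSucc, if_neg hne]
      exact (Fin.castSucc_lt_last _).ne
  induction p using Fin.lastCases with
  | last =>
    induction q using Fin.lastCases with
    | last => exact absurd rfl hpq
    | cast j =>
      refine ⟨[], ?_⟩
      simp only [actF_nil, id]
      simp [(Fin.castSucc_lt_last j).ne]
  | cast i =>
    induction q using Fin.lastCases with
    | last =>
      refine ⟨[], ?_⟩
      simp only [actF_nil, id]
      simp [(Fin.castSucc_lt_last i).ne]
    | cast j =>
      have hij : i ≠ j := fun h => hpq (by rw [h])
      obtain ⟨v, hv1, hv2⟩ := key i j hij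
      exact ⟨v, by simp [hv1, hv2]⟩

end Stmt10

namespace Stmt10
variable {k : ℕ}

/-- the witness language -/
def Lang (k : ℕ) : Set (List (Fin 4)) := {w | actF k w 0 ≠ Fin.last (k+3)}

lemma mem_Lang (w : List (Fin 4)) : w ∈ Lang k ↔ actF k w 0 ≠ Fin.last (k+3) := Iff.rfl

lemma Lang_prefix_closed : ∀ w ∈ Lang k, ∀ u : List (Fin 4), u <+: w → u ∈ Lang k := by
  intro w hw u hu
  obtain ⟨t, rfl⟩ := hu
  rw [mem_Lang] at hw ⊢
  intro hu
  apply hw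
  rw [actF_append, Function.comp_apply, hu, actF_last]

/-- the quotient by state -/
def Qst (k : ℕ) (q : Fin (k+4)) : Set (List (Fin 4)) := {x | actF k x q ≠ Fin.last (k+3)}

lemma leftQ_eq (w : List (Fin 4)) : leftQ (Lang k) w = Qst k (actF k w 0) := by
  ext x
  show w ++ x ∈ Lang k ↔ _
  rw [mem_Lang, actF_append, Function.comp_apply]
  exact Iff.rfl

lemma Qst_injective : Function.Injective (Qst k) := by
  intro p q h
  by_contra hpq
  obtain ⟨v, hv⟩ := distinguish p q hpq
  apply hv
  have : (v ∈ Qst k p) = (v ∈ Qst k q) := by rw [h]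
  simp only [Qst, Set.mem_setOf_eq] at this
  rw [eq_iff_iff] at this ⊢
  tauto

lemma range_leftQ : Set.range (leftQ (Lang k)) = Set.range (Qst k) := by
  apply Set.Subset.antisymm
  · rintro _ ⟨w, rfl⟩
    exact ⟨actF k w 0, (leftQ_eq w).symm⟩
  · rintro _ ⟨q, rfl⟩
    obtain ⟨w, hw⟩ := reach q
    exact ⟨w, by rw [leftQ_eq, hw]⟩

lemma quotCompl_Lang : quotCompl (Lang k) = k + 4 := by
  rw [quotCompl, range_leftQ, Nat.card_range_of_injective Qst_injective,
    Nat.card_eq_fintype_card, Fintype.card_fin]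

lemma synRel_iff (x y : List (Fin 4)) :
    synRel (Lang k) x y ↔ actF k x = actF k y := by
  constructor
  · intro h
    funext q
    obtain ⟨u, hu⟩ := reach q
    by_contra hne
    obtain ⟨v, hv⟩ := distinguish _ _ hne
    apply hv
    have h1 := h u v
    rw [mem_Lang, mem_Lang] at h1
    have e1 : u ++ x ++ v = u ++ (x ++ v) := by simp
    have e2 : u ++ y ++ v = u ++ (y ++ v) := by simp
    rw [e1, e2, actF_append, actF_append, Function.comp_apply, Function.comp_apply,
      actF_append, actF_append, Function.comp_apply, Function.comp_apply, hu] at h1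
    rw [eq_iff_iff]
    constructor
    · intro h2
      by_contra h3
      exact (h1.mpr h3) h2
    · intro h2
      by_contra h3
      exact (h1.mp h3) h2
  · intro h u v
    rw [mem_Lang, mem_Lang]
    have e1 : u ++ x ++ v = u ++ (x ++ v) := by simp
    have e2 : u ++ y ++ v = u ++ (y ++ v) := by simp
    rw [e1, e2, actF_append, actF_append, Function.comp_apply, Function.comp_apply,
      actF_append, actF_append, Function.comp_apply, Function.comp_apply, h]

/-- the syntactic monoid is the set of transformations fixing the sink -/
noncomputable def synEquiv :
    Quotient (synSetoid (Lang k)) ≃ {f : Fin (k+4) → Fin (k+4) // f (Fin.last (k+3)) = Fin.last (k+3)} := by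
  apply Equiv.ofBijective (Quotient.lift
    (fun w : {w : List (Fin 4) // w ≠ []} => (⟨actF k w.1, actF_last w.1⟩ :
      {f : Fin (k+4) → Fin (k+4) // f (Fin.last (k+3)) = Fin.last (k+3)}))
    (fun a b hab => Subtype.ext ((synRel_iff a.1 b.1).mp (by exact hab))))
  constructor
  · intro a b
    induction a using Quotient.ind with | _ a =>
    induction b using Quotient.ind with | _ b =>
    intro h
    apply Quotient.sound
    have : actF k a.1 = actF k b.1 := congrArg Subtype.val h
    exact (synRel_iff a.1 b.1).mpr this
  · rintro ⟨f, hf⟩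
    obtain ⟨w, hw, hwf⟩ := R_all f hf
    exact ⟨Quotient.mk _ ⟨w, hw⟩, Subtype.ext hwf⟩

noncomputable def fixEquiv :
    {f : Fin (k+4) → Fin (k+4) // f (Fin.last (k+3)) = Fin.last (k+3)} ≃ (Fin (k+3) → Fin (k+4)) where
  toFun f := fun i => f.1 i.castSucc
  invFun g := ⟨Fin.snoc g (Fin.last (k+3)), Fin.snoc_last _ _⟩
  left_inv := by
    rintro ⟨f, hf⟩
    apply Subtype.ext
    funext x
    induction x using Fin.lastCases with
    | last => simp [hf]
    | cast i => simp
  right_inv := by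
    intro g
    funext i
    simp

lemma synCompl_Lang : synCompl (Lang k) = (k + 4) ^ (k + 3) := by
  rw [synCompl, Nat.card_congr ((synEquiv (k := k)).trans fixEquiv),
    Nat.card_eq_fintype_card, Fintype.card_fun, Fintype.card_fin, Fintype.card_fin]

end Stmt10

/-- For every `n ≥ 4` there exists a prefix-closed regular
language over a four-letter alphabet with quotient complexity `n` and syntactic
complexity `n^{n-1}`. -/
theorem stmt_10 (n : ℕ) (hn : 4 ≤ n) :
    ∃ L : Set (List (Fin 4)),
      (∀ w ∈ L, ∀ u : List (Fin 4), u <+: w → u ∈ L) ∧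
      (Set.range (leftQ L)).Finite ∧
      quotCompl L = n ∧ synCompl L = n ^ (n - 1) := by
  obtain ⟨k, rfl⟩ : ∃ k, n = k + 4 := ⟨n - 4, by omega⟩
  refine ⟨Stmt10.Lang k, Stmt10.Lang_prefix_closed, ?_, ?_, ?_⟩
  · rw [Stmt10.range_leftQ]
    exact Set.finite_range _
  · exact Stmt10.quotCompl_Lang
  · rw [Stmt10.synCompl_Lang]
    congr 1
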